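/- arXiv:0810.4419 — 3 statements merged into one kernel-verified Lean document; each statement's English description precedes it below -/
import Mathlib

section
/- In a link graph satisfying the binding rule, if the parent map of the accompanying place graph is acyclic and the scope rule holds, then no two distinct binding ports are peers; consequently every edge is linked to at most one binding port, and the set of edges E decomposes as a disjoint union E = E_F ⊎ E_B where E_B is in bijection with the set P_B of binding ports via the link map. -/
/-!
STATEMENT 2: in a binding bigraph (acyclic parent map, binding rule, scope
rule), no two distinct binding ports are peers; consequently the link map is
injective on binding ports, every edge is linked to at most one binding port,
and `E` decomposes as the disjoint union of the free edges `E_F` and the bound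
edges `E_B`, the latter being in bijection with the binding ports `P_B` via the
link map.
-/

namespace Bigraphs

abbrev Pl (n m : ℕ) (V : Type*) := Sum (Fin n) (Sum V (Fin m))

def inDom {n m : ℕ} {V : Type*} : Sum (Fin n) V → Pl n m V
  | .inl i => .inl i
  | .inr v => .inr (.inl v)

def inCod {n m : ℕ} {V : Type*} : Sum V (Fin m) → Pl n m V
  | .inl v => .inr (.inl v)
  | .inr j => .inr (.inr j)

def step {n m : ℕ} {V : Type*} (prnt : Sum (Fin n) V → Sum V (Fin m))
    (x y : Pl n m V) : Prop :=
  ∃ a, inDom a = x ∧ inCod (prnt a) = y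

def plt {n m : ℕ} {V : Type*} (prnt : Sum (Fin n) V → Sum V (Fin m)) :
    Pl n m V → Pl n m V → Prop :=
  Relation.TransGen (step prnt)

def Acyclic {n m : ℕ} {V : Type*} (prnt : Sum (Fin n) V → Sum V (Fin m)) : Prop :=
  ∀ v : V, ¬ plt prnt (.inr (.inl v)) (.inr (.inl v))

/-- A binding bigraph `G : (n, X, locX) → (m, Y, locY)`. `PB` are the binding
ports, `PF` the free ports, located at their nodes; `X`/`Y` the inner/outer
names with their locality maps; `E` the edges. -/
structure Bigraph (n m : ℕ) (X Y : Type*) where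
  V : Type
  E : Type
  PB : Type
  PF : Type
  nodeB : PB → V
  nodeF : PF → V
  locX : X → Option (Fin n)
  locY : Y → Option (Fin m)
  prnt : Sum (Fin n) V → Sum V (Fin m)
  link : Sum (Sum PB PF) X → Sum E Y

variable {n m : ℕ} {X Y : Type*}

/-- Points of a bigraph: ports and inner names. -/
abbrev Bigraph.Point (G : Bigraph n m X Y) := Sum (Sum G.PB G.PF) X

/-- The location of a point (`none` for global inner names). -/
def Bigraph.pointLoc (G : Bigraph n m X Y) : G.Point → Option (Sum (Fin n) G.V)
  | .inl (.inl p) => some (.inr (G.nodeB p))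
  | .inl (.inr p) => some (.inr (G.nodeF p))
  | .inr x => (G.locX x).map .inl

/-- The binding rule: no binding port is linked to an outer name. -/
def Bigraph.BindingRule (G : Bigraph n m X Y) : Prop :=
  ∀ p : G.PB, ∃ e : G.E, G.link (.inl (.inl p)) = .inl e

/-- The scope rule: every peer of a binder located at `w` is located at some
`w' ≺ w`.  Binders are the binding ports (located at their node) and the local
outer names (located at their root). -/
def Bigraph.ScopeRule (G : Bigraph n m X Y) : Prop :=
  (∀ p : G.PB, ∀ q : G.Point, q ≠ .inl (.inl p) →
    G.link q = G.link (.inl (.inl p)) →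
    ∃ w', G.pointLoc q = some w' ∧
      plt G.prnt (inDom w') (inCod (.inl (G.nodeB p)))) ∧
  (∀ y : Y, ∀ j : Fin m, G.locY y = some j → ∀ q : G.Point, G.link q = .inr y →
    ∃ w', G.pointLoc q = some w' ∧
      plt G.prnt (inDom w') (inCod (.inr j)))

/-- An edge is bound when some binding port is linked to it. -/
def Bigraph.Bound (G : Bigraph n m X Y) (e : G.E) : Prop :=
  ∃ p : G.PB, G.link (.inl (.inl p)) = .inl e

/-- No two distinct binding ports are peers; every edge is linked to at most
one binding port; and the edges decompose as free edges plus bound edges, the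
latter in bijection with the binding ports via the link map. -/
theorem binding_ports_not_peers (G : Bigraph n m X Y)
    (hac : Acyclic G.prnt) (hbind : G.BindingRule) (hscope : G.ScopeRule) :
    Function.Injective (fun p : G.PB => G.link (.inl (.inl p))) ∧
    Nonempty (G.PB ≃ {e : G.E // G.Bound e}) ∧
    Nonempty (G.E ≃ Sum {e : G.E // ¬ G.Bound e} {e : G.E // G.Bound e}) := by
  classical
  have hinj : Function.Injective (fun p : G.PB => G.link (.inl (.inl p))) := by
    intro p q hpq
    by_contra hne
    simp only at hpq
    have hne' : (Sum.inl (Sum.inl q) : G.Point) ≠ .inl (.inl p) := by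
      intro h
      exact hne (by injection (Sum.inl_injective h) with h'; exact h'.symm ▸ rfl)
    obtain ⟨wq, hwq, hq⟩ := hscope.1 p (.inl (.inl q)) hne' hpq.symm
    have hne'' : (Sum.inl (Sum.inl p) : G.Point) ≠ .inl (.inl q) :=
      fun h => hne' (by rw [h])
    obtain ⟨wp, hwp, hp⟩ := hscope.1 q (.inl (.inl p)) hne'' hpq
    simp only [Bigraph.pointLoc, Option.some.injEq] at hwq hwp
    subst hwq hwp
    exact hac (G.nodeB p) ((hp.trans hq : plt G.prnt _ _))
  refine ⟨hinj, ?_, ?_⟩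
  · refine ⟨Equiv.ofBijective
      (fun p => ⟨(hbind p).choose, p, (hbind p).choose_spec⟩) ⟨?_, ?_⟩⟩
    · intro p q h
      have he : (hbind p).choose = (hbind q).choose := by
        simpa using congrArg Subtype.val h
      exact hinj (((hbind p).choose_spec.trans (congrArg Sum.inl he)).trans
        (hbind q).choose_spec.symm)
    · rintro ⟨e, p, hp⟩
      refine ⟨p, Subtype.ext ?_⟩
      have := (hbind p).choose_spec.symm.trans hp
      exact Sum.inl_injective this
  · exact ⟨(Equiv.sumCompl G.Bound).symm.trans (Equiv.sumComm _ _)⟩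

end Bigraphs
end

section
/- The composition of two binding bigraphs G : U₁ → U₂ and G' : U₂ → U₃ (formed by taking coproducts of nodes, edges, and control maps, and composing parent and link maps through the middle interface) again has an acyclic parent map. -/
/-!
STATEMENT 3: the composite of two binding bigraphs (whose place-graph part is
obtained by taking the coproduct of the node sets and composing the parent maps
through the middle interface) again has an acyclic parent map.
-/

namespace Bigraphs

variable {n m k : ℕ} {V V' : Type*}

/-- Reinterpret a value of the second parent map in the composite. -/
def through (x : Sum V' (Fin k)) : Sum (Sum V V') (Fin k) :=
  match x with
  | .inl v' => .inl (.inr v')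
  | .inr r => .inr r

/-- The parent map of the composite place graph: apply `prnt`, and whenever the
result lies in the middle interface `m`, continue with `prnt'`. -/
def compPrnt (prnt : Sum (Fin n) V → Sum V (Fin m))
    (prnt' : Sum (Fin m) V' → Sum V' (Fin k)) :
    Sum (Fin n) (Sum V V') → Sum (Sum V V') (Fin k)
  | .inl i =>
      match prnt (.inl i) with
      | .inl v => .inl (.inl v)
      | .inr j => through (prnt' (.inl j))
  | .inr (.inl v) =>
      match prnt (.inr v) with
      | .inl w => .inl (.inl w)
      | .inr j => through (prnt' (.inl j))
  | .inr (.inr v') => through (prnt' (.inr v'))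

/-- "Right" positions of the composite: nodes of the outer graph or roots. -/
def Rt (y : Pl n k (Sum V V')) : Prop :=
  (∃ v' : V', y = .inr (.inl (.inr v'))) ∨ ∃ r : Fin k, y = .inr (.inr r)

lemma no_step_root {W : Type*} (p : Sum (Fin n) W → Sum W (Fin k)) (r : Fin k)
    (y : Pl n k W) : ¬ step p (.inr (.inr r)) y := by
  rintro ⟨a, ha, -⟩
  cases a <;> simp [inDom] at ha

lemma step_L {prnt : Sum (Fin n) V → Sum V (Fin m)}
    {prnt' : Sum (Fin m) V' → Sum V' (Fin k)} {w : V} {y}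
    (hs : step (compPrnt prnt prnt') (.inr (.inl (.inl w))) y) :
    (∃ u : V, y = .inr (.inl (.inl u)) ∧
      step prnt (.inr (.inl w)) (.inr (.inl u))) ∨ Rt y := by
  obtain ⟨a, ha, hy⟩ := hs
  rcases a with i | b
  · simp [inDom] at ha
  · simp only [inDom, Sum.inr.injEq, Sum.inl.injEq] at ha
    subst ha
    rcases hp : prnt (.inr w) with u | j
    · left
      refine ⟨u, ?_, ⟨.inr w, rfl, by rw [hp]; rfl⟩⟩
      rw [← hy]; simp [compPrnt, hp, inCod]
    · right
      rw [← hy]; simp only [compPrnt, hp]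
      rcases hq : prnt' (.inl j) with w' | r
      · exact Or.inl ⟨w', by simp [through, inCod]⟩
      · exact Or.inr ⟨r, by simp [through, inCod]⟩

lemma step_R {prnt : Sum (Fin n) V → Sum V (Fin m)}
    {prnt' : Sum (Fin m) V' → Sum V' (Fin k)} {v' : V'} {y}
    (hs : step (compPrnt prnt prnt') (.inr (.inl (.inr v'))) y) :
    (∃ w' : V', y = .inr (.inl (.inr w')) ∧
      step prnt' (.inr (.inl v')) (.inr (.inl w'))) ∨ ∃ r : Fin k, y = .inr (.inr r) := by
  obtain ⟨a, ha, hy⟩ := hs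
  rcases a with i | b
  · simp [inDom] at ha
  · simp only [inDom, Sum.inr.injEq, Sum.inl.injEq] at ha
    subst ha
    rcases hq : prnt' (.inr v') with w' | r
    · left
      refine ⟨w', ?_, ⟨.inr v', rfl, by rw [hq]; rfl⟩⟩
      rw [← hy]; simp [compPrnt, hq, through, inCod]
    · right
      exact ⟨r, by rw [← hy]; simp [compPrnt, hq, through, inCod]⟩

lemma plt_L {prnt : Sum (Fin n) V → Sum V (Fin m)}
    {prnt' : Sum (Fin m) V' → Sum V' (Fin k)} {w : V} {y}
    (hp : plt (compPrnt prnt prnt') (.inr (.inl (.inl w))) y) :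
    (∃ u : V, y = .inr (.inl (.inl u)) ∧
      plt prnt (.inr (.inl w)) (.inr (.inl u))) ∨ Rt y := by
  induction hp with
  | single hs =>
      rcases step_L hs with ⟨u, rfl, hstep⟩ | hr
      · exact Or.inl ⟨u, rfl, Relation.TransGen.single hstep⟩
      · exact Or.inr hr
  | tail _ hs ih =>
      rcases ih with ⟨u, rfl, hpl⟩ | hr
      · rcases step_L hs with ⟨u2, rfl, hstep⟩ | hr2
        · exact Or.inl ⟨u2, rfl, hpl.tail hstep⟩
        · exact Or.inr hr2
      · rcases hr with ⟨v', rfl⟩ | ⟨r, rfl⟩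
        · rcases step_R hs with ⟨w', rfl, -⟩ | ⟨r, rfl⟩
          · exact Or.inr (Or.inl ⟨w', rfl⟩)
          · exact Or.inr (Or.inr ⟨r, rfl⟩)
        · exact absurd hs (no_step_root _ r _)

lemma plt_R {prnt : Sum (Fin n) V → Sum V (Fin m)}
    {prnt' : Sum (Fin m) V' → Sum V' (Fin k)} {v' : V'} {y}
    (hp : plt (compPrnt prnt prnt') (.inr (.inl (.inr v'))) y) :
    (∃ w' : V', y = .inr (.inl (.inr w')) ∧
      plt prnt' (.inr (.inl v')) (.inr (.inl w'))) ∨ ∃ r : Fin k, y = .inr (.inr r) := by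
  induction hp with
  | single hs =>
      rcases step_R hs with ⟨w', rfl, hstep⟩ | hr
      · exact Or.inl ⟨w', rfl, Relation.TransGen.single hstep⟩
      · exact Or.inr hr
  | tail _ hs ih =>
      rcases ih with ⟨w', rfl, hpl⟩ | ⟨r, rfl⟩
      · rcases step_R hs with ⟨w2, rfl, hstep⟩ | hr2
        · exact Or.inl ⟨w2, rfl, hpl.tail hstep⟩
        · exact Or.inr hr2
      · exact absurd hs (no_step_root _ r _)

/-- Composition of (the place-graph parts of) binding bigraphs preserves
acyclicity of the parent map. -/
theorem compPrnt_acyclic (prnt : Sum (Fin n) V → Sum V (Fin m))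
    (prnt' : Sum (Fin m) V' → Sum V' (Fin k))
    (h : Acyclic prnt) (h' : Acyclic prnt') :
    Acyclic (compPrnt prnt prnt') := by
  rintro (w | v') hcyc
  · rcases plt_L hcyc with ⟨u, hu, hpl⟩ | hr
    · obtain rfl : w = u := by simpa using hu
      exact h w hpl
    · rcases hr with ⟨v', hv⟩ | ⟨r, hr⟩ <;> simp_all
  · rcases plt_R hcyc with ⟨w', hw, hpl⟩ | ⟨r, hr⟩
    · obtain rfl : v' = w' := by simpa using hw
      exact h' v' hpl
    · simp at hr

end Bigraphs
end

section
/- The binding rule is preserved by composition of binding bigraphs: if G : U₁ → U₂ and G' : U₂ → U₃ both satisfy the binding rule (no binding port is linked to an outer name), then their composite G' ∘ G also satisfies the binding rule. -/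
/-!
STATEMENT 5: the binding rule (no binding port is linked to an outer name) is
preserved by composition of binding bigraphs (composition of their link
graphs through the middle name set).
-/

namespace Bigraphs

/-- A link graph `X → Y`: binding ports `PB`, free ports `PF`, edges `E`, and a
link map sending points (ports and inner names) to edges or outer names. -/
structure LinkGraph (X Y : Type*) where
  PB : Type
  PF : Type
  E : Type
  link : Sum (Sum PB PF) X → Sum E Y

variable {X Y Z : Type*}

/-- Include an answer of the second link graph into the composite. -/
def pushSnd (G : LinkGraph X Y) (H : LinkGraph Y Z) :
    Sum H.E Z → Sum (Sum G.E H.E) Z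
  | .inl e => .inl (.inr e)
  | .inr z => .inr z

/-- Chase an answer of the first link graph through the second. -/
def chase (G : LinkGraph X Y) (H : LinkGraph Y Z) :
    Sum G.E Y → Sum (Sum G.E H.E) Z
  | .inl e => .inl (.inl e)
  | .inr y => pushSnd G H (H.link (.inr y))

/-- Composition of link graphs: coproduct of ports and edges; a point is sent
to its `link`-image if that is an edge, and otherwise continues through the
middle names with the second link map. -/
def compLink (G : LinkGraph X Y) (H : LinkGraph Y Z) : LinkGraph X Z where
  PB := Sum G.PB H.PB
  PF := Sum G.PF H.PF
  E := Sum G.E H.E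
  link := fun p =>
    match p with
    | .inl (.inl (.inl p)) => chase G H (G.link (.inl (.inl p)))
    | .inl (.inl (.inr p)) => pushSnd G H (H.link (.inl (.inl p)))
    | .inl (.inr (.inl p)) => chase G H (G.link (.inl (.inr p)))
    | .inl (.inr (.inr p)) => pushSnd G H (H.link (.inl (.inr p)))
    | .inr x => chase G H (G.link (.inr x))

/-- The binding rule: every binding port is linked to an edge. -/
def BindingRule (G : LinkGraph X Y) : Prop :=
  ∀ p : G.PB, ∃ e : G.E, G.link (.inl (.inl p)) = .inl e

/-- The binding rule is preserved by composition of (the link-graph parts of)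
binding bigraphs. -/
theorem bindingRule_comp (G : LinkGraph X Y) (H : LinkGraph Y Z)
    (hG : BindingRule G) (hH : BindingRule H) :
    BindingRule (compLink G H) := by
  rintro (p | p)
  · obtain ⟨e, he⟩ := hG p
    exact ⟨.inl e, by simp [compLink, he, chase]⟩
  · obtain ⟨e, he⟩ := hH p
    exact ⟨.inr e, by simp [compLink, he, pushSnd]⟩

end Bigraphs
end
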